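/- Let q \in (0,1) and p \in \mathbb{N}, p \ge 1. Then \int_0^{\pi} \sqrt{1 - 2q^p\cos(pt) + q^{2p}}/(1 - 2q\cos t + q^2)\, dt = 2\,(1-q^{2p})/(1-q^2) \cdot \mathbf{K}(q^p), where \mathbf{K}(\rho) = \int_0^{\pi/2} dt/\sqrt{1-\rho^2 \sin^2 t} is the complete elliptic integral of the first kind. -/

import Mathlib

open Real intervalIntegral

lemma rootsum (p : ℕ) (hp : 1 ≤ p) (w : ℂ) (hw : ‖w‖ < 1) :
    ∑ k ∈ Finset.range p, (1 + w * Complex.exp (2*π*Complex.I/p) ^ k) /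
        (1 - w * Complex.exp (2*π*Complex.I/p) ^ k)
      = p * (1 + w ^ p) / (1 - w ^ p) := by
  set ζ : ℂ := Complex.exp (2*π*Complex.I/p) with hζ
  have hprim : IsPrimitiveRoot ζ p := Complex.isPrimitiveRoot_exp p (by omega)
  have hζp : ζ ^ p = 1 := hprim.pow_eq_one
  have habsζ : ‖ζ‖ = 1 := by
    rw [hζ, Complex.norm_exp]
    norm_num [Complex.div_re, Complex.mul_I_re]
  have hden : ∀ k, 1 - w * ζ ^ k ≠ 0 := by
    intro k h
    have h2 : ‖w * ζ ^ k‖ = ‖w‖ := by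
      simp [norm_mul, norm_pow, habsζ]
    have h1 : w * ζ ^ k = 1 := by linear_combination -h
    rw [h1] at h2
    simp at h2
    linarith [h2 ▸ hw]
  have hwp : 1 - w ^ p ≠ 0 := by
    intro h
    have h1 : w ^ p = 1 := by linear_combination -h
    have : ‖w‖ ^ p = 1 := by
      rw [← norm_pow, h1, norm_one]
    have hlt : ‖w‖ ^ p < 1 :=
      pow_lt_one₀ (norm_nonneg w) hw (by omega)
    linarith
  -- key: sum of (1 - w^p)/(1 - w ζ^k) = p
  have key : ∑ k ∈ Finset.range p, (1 - w ^ p) / (1 - w * ζ ^ k) = p := by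
    have step1 : ∀ k, (1 - w ^ p) / (1 - w * ζ ^ k)
        = ∑ j ∈ Finset.range p, (w * ζ ^ k) ^ j := by
      intro k
      have hx1 : w * ζ ^ k ≠ 1 := fun h => hden k (by rw [h]; ring)
      rw [geom_sum_eq hx1]
      rw [mul_pow, ← pow_mul, mul_comm k p, pow_mul, hζp, one_pow, mul_one]
      rw [div_eq_div_iff (hden k) (sub_ne_zero.2 hx1)]
      ring
    simp_rw [step1]
    rw [Finset.sum_comm]
    have inner : ∀ j ∈ Finset.range p,
        (∑ k ∈ Finset.range p, (w * ζ ^ k) ^ j)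
          = if j = 0 then (p : ℂ) else 0 := by
      intro j hj
      rcases eq_or_ne j 0 with rfl | hj0
      · simp
      · simp only [if_neg hj0]
        have : ∀ k, (w * ζ ^ k) ^ j = w ^ j * (ζ ^ j) ^ k := by
          intro k; rw [mul_pow, ← pow_mul, mul_comm k j, pow_mul]
        simp_rw [this, ← Finset.mul_sum]
        have hζj : ζ ^ j ≠ 1 :=
          hprim.pow_ne_one_of_pos_of_lt (by omega) (Finset.mem_range.1 hj)
        rw [geom_sum_eq hζj, ← pow_mul, mul_comm j p, pow_mul, hζp, one_pow]
        simp
    rw [Finset.sum_congr rfl inner]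
    simp only [Finset.sum_ite_eq' (Finset.range p) 0 (fun _ => (p:ℂ)), Finset.mem_range]
    rw [if_pos (by omega)]
  -- rewrite each term
  have term : ∀ k, (1 + w * ζ ^ k) / (1 - w * ζ ^ k)
      = 2 * ((1 - w ^ p) / (1 - w * ζ ^ k)) / (1 - w ^ p) - 1 := by
    intro k
    have h2 : (2 : ℂ) * ((1 - w ^ p) / (1 - w * ζ ^ k)) / (1 - w ^ p)
        = 2 / (1 - w * ζ ^ k) := by
      rw [mul_div_assoc, div_right_comm, div_self hwp, one_div, ← div_eq_mul_inv]
    rw [h2, eq_sub_iff_add_eq, div_add' _ _ _ (hden k)]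
    rw [div_eq_div_iff (hden k) (hden k)]
    ring
  simp_rw [term]
  rw [Finset.sum_sub_distrib, ← Finset.sum_div, ← Finset.mul_sum, key]
  simp only [Finset.sum_const, Finset.card_range, nsmul_eq_mul, mul_one]
  field_simp
  ring

lemma poisson_re (r θ : ℝ) (hr0 : 0 ≤ r) (hr1 : r < 1) :
    ((1 + (r:ℂ) * Complex.exp (θ * Complex.I)) /
        (1 - (r:ℂ) * Complex.exp (θ * Complex.I))).re
      = (1 - r^2) / (1 - 2*r*Real.cos θ + r^2) := by
  have hd : 0 < 1 - 2*r*Real.cos θ + r^2 := by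
    nlinarith [Real.cos_le_one θ, mul_pos (sub_pos.2 hr1) (sub_pos.2 hr1)]
  set z : ℂ := (r:ℂ) * Complex.exp (θ * Complex.I) with hz
  have hre : z.re = r * Real.cos θ := by simp [hz, Complex.exp_ofReal_mul_I_re]
  have him : z.im = r * Real.sin θ := by simp [hz, Complex.exp_ofReal_mul_I_im]
  have hnorm : Complex.normSq (1 - z) = 1 - 2*r*Real.cos θ + r^2 := by
    rw [Complex.normSq_apply]
    simp only [Complex.sub_re, Complex.sub_im, Complex.one_re, Complex.one_im, hre, him]
    nlinarith [Real.sin_sq_add_cos_sq θ]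
  rw [Complex.div_re, hnorm]
  simp only [Complex.add_re, Complex.add_im, Complex.sub_re, Complex.sub_im,
    Complex.one_re, Complex.one_im, hre, him]
  rw [← add_div]
  congr 1
  nlinarith [Real.sin_sq_add_cos_sq θ]

lemma poisson_sum (q : ℝ) (hq0 : 0 < q) (hq1 : q < 1) (p : ℕ) (hp : 1 ≤ p) (t : ℝ) :
    ∑ k ∈ Finset.range p, (1 - q^2) / (1 - 2*q*Real.cos (t + 2*π*k/p) + q^2)
      = p * (1 - q^(2*p)) / (1 - 2*q^p*Real.cos (p*t) + q^(2*p)) := by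
  set w : ℂ := (q:ℂ) * Complex.exp (t * Complex.I) with hwdef
  have hp0 : (p : ℝ) ≠ 0 := Nat.cast_ne_zero.2 (by omega)
  have habsw : ‖w‖ = q := by
    simp [hwdef, Complex.norm_exp, abs_of_pos hq0]
  have hzk : ∀ k : ℕ, w * Complex.exp (2*π*Complex.I/p) ^ k
      = ((q:ℝ):ℂ) * Complex.exp ((t + 2*π*k/p : ℝ) * Complex.I) := by
    intro k
    rw [← Complex.exp_nat_mul, hwdef, mul_assoc, ← Complex.exp_add]
    congr 1
    push_cast
    field_simp
  have hwp : w ^ p = ((q^p : ℝ):ℂ) * Complex.exp (((p:ℝ) * t : ℝ) * Complex.I) := by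
    rw [hwdef, mul_pow, ← Complex.exp_nat_mul]
    push_cast
    ring_nf
  have hqp0 : (0:ℝ) ≤ q ^ p := le_of_lt (pow_pos hq0 p)
  have hqp1 : q ^ p < 1 := pow_lt_one₀ hq0.le hq1 (by omega)
  have hsum := rootsum p hp w (by rw [habsw]; exact hq1)
  have := congrArg Complex.re hsum
  rw [Complex.re_sum] at this
  calc ∑ k ∈ Finset.range p, (1 - q^2) / (1 - 2*q*Real.cos (t + 2*π*k/p) + q^2)
      = ∑ k ∈ Finset.range p, ((1 + w * Complex.exp (2*π*Complex.I/p) ^ k) /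
          (1 - w * Complex.exp (2*π*Complex.I/p) ^ k)).re := by
        refine Finset.sum_congr rfl fun k _ => ?_
        rw [hzk k, poisson_re q _ hq0.le hq1]
    _ = ((p : ℂ) * (1 + w ^ p) / (1 - w ^ p)).re := this
    _ = p * (1 - q^(2*p)) / (1 - 2*q^p*Real.cos (p*t) + q^(2*p)) := by
        rw [mul_div_assoc, hwp]
        rw [show ((p:ℂ) * ((1 + ((q^p : ℝ):ℂ) * Complex.exp (((p:ℝ)*t : ℝ) * Complex.I)) /
              (1 - ((q^p : ℝ):ℂ) * Complex.exp (((p:ℝ)*t : ℝ) * Complex.I)))).re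
            = (p:ℝ) * ((1 + ((q^p : ℝ):ℂ) * Complex.exp (((p:ℝ)*t : ℝ) * Complex.I)) /
              (1 - ((q^p : ℝ):ℂ) * Complex.exp (((p:ℝ)*t : ℝ) * Complex.I))).re by
          simp [Complex.mul_re]]
        rw [poisson_re (q^p) ((p:ℝ)*t) hqp0 hqp1]
        rw [show q^(2*p) = (q^p)^2 by rw [← pow_mul, mul_comm]]
        ring

lemma ell_sub (ρ : ℝ) (h0 : 0 ≤ ρ) (h1 : ρ < 1) :
    ∫ u in (0:ℝ)..π, 1 / Real.sqrt (1 - 2*ρ*Real.cos u + ρ^2)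
      = ∫ φ in (0:ℝ)..π, 1 / Real.sqrt (1 - ρ^2 * Real.sin φ^2) := by
  have hNpos : ∀ u : ℝ, 0 < 1 - 2*ρ*Real.cos u + ρ^2 := fun u => by
    nlinarith [Real.cos_le_one u, mul_pos (sub_pos.2 h1) (sub_pos.2 h1)]
  have hΔpos : ∀ φ : ℝ, 0 < 1 - ρ^2 * Real.sin φ^2 := fun φ => by
    nlinarith [Real.sin_sq_le_one φ, sq_nonneg ρ, pow_lt_one₀ h0 h1 (two_ne_zero)]
  set f : ℝ → ℝ := fun u => 1 / Real.sqrt (1 - 2*ρ*Real.cos u + ρ^2) with hf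
  set g : ℝ → ℝ := fun φ => φ - Real.arcsin (ρ * Real.sin φ) with hg
  set g' : ℝ → ℝ := fun φ => 1 - ρ * Real.cos φ / Real.sqrt (1 - ρ^2 * Real.sin φ^2) with hg'
  have hbound : ∀ φ : ℝ, |ρ * Real.sin φ| ≤ ρ := fun φ => by
    rw [abs_mul, abs_of_nonneg h0]
    nlinarith [Real.abs_sin_le_one φ, abs_nonneg (Real.sin φ)]
  have hsq : ∀ φ : ℝ, 1 - (ρ * Real.sin φ)^2 = 1 - ρ^2 * Real.sin φ^2 := fun φ => by ring
  have hderiv : ∀ φ ∈ Set.uIcc (0:ℝ) π, HasDerivAt g (g' φ) φ := by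
    intro φ _
    have hne1 : ρ * Real.sin φ ≠ 1 := fun h => by
      have := hbound φ; rw [h] at this; simp at this; linarith
    have hnem1 : ρ * Real.sin φ ≠ -1 := fun h => by
      have := hbound φ; rw [h] at this; simp at this; linarith
    have h2 : HasDerivAt (fun x : ℝ => ρ * Real.sin x) (ρ * Real.cos φ) φ :=
      (Real.hasDerivAt_sin φ).const_mul ρ
    have h3 : HasDerivAt (fun x : ℝ => Real.arcsin (ρ * Real.sin x))
        (1 / Real.sqrt (1 - (ρ * Real.sin φ)^2) * (ρ * Real.cos φ)) φ :=
      (Real.hasDerivAt_arcsin hnem1 hne1).comp (h₂ := Real.arcsin) φ h2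
    have h4 : HasDerivAt (fun x : ℝ => x - Real.arcsin (ρ * Real.sin x))
        (1 - 1 / Real.sqrt (1 - (ρ * Real.sin φ)^2) * (ρ * Real.cos φ)) φ := (hasDerivAt_id φ).sub h3
    convert h4 using 1
    rw [hg', hsq]
    field_simp
  have hcontg' : ContinuousOn g' (Set.uIcc (0:ℝ) π) := by
    apply Continuous.continuousOn
    apply Continuous.sub continuous_const
    apply Continuous.div (continuous_const.mul Real.continuous_cos)
    · exact (Real.continuous_sqrt.comp (by continuity))
    · intro x
      exact (Real.sqrt_pos.2 (hΔpos x)).ne'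
  have hcontf : Continuous f := by
    rw [hf]
    apply Continuous.div continuous_const
    · exact Real.continuous_sqrt.comp (by continuity)
    · intro x
      exact (Real.sqrt_pos.2 (hNpos x)).ne'
  have hmain := integral_comp_smul_deriv hderiv hcontg' hcontf
  have hg0 : g 0 = 0 := by simp [hg]
  have hgπ : g π = π := by simp [hg]
  rw [hg0, hgπ] at hmain
  rw [← hmain]
  refine integral_congr fun φ _ => ?_
  -- pointwise identity
  have hΔ := hΔpos φ
  set Δ : ℝ := Real.sqrt (1 - ρ^2 * Real.sin φ^2) with hΔdef
  have hΔsq : Δ^2 = 1 - ρ^2 * Real.sin φ^2 := Real.sq_sqrt hΔ.le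
  have hΔ0 : 0 < Δ := Real.sqrt_pos.2 hΔ
  have hcosg : Real.cos (g φ) = Real.cos φ * Δ + ρ * Real.sin φ * Real.sin φ := by
    rw [hg]
    rw [Real.cos_sub, Real.cos_arcsin, Real.sin_arcsin (by nlinarith [hbound φ, abs_nonneg (ρ * Real.sin φ), neg_abs_le (ρ * Real.sin φ)]) (by nlinarith [hbound φ, le_abs_self (ρ * Real.sin φ)])]
    rw [hsq]
    ring
  have hpos2 : 0 < Δ - ρ * Real.cos φ := by
    nlinarith [Real.sin_sq_add_cos_sq φ, sq_nonneg (Δ - ρ * Real.cos φ), sq_nonneg (Δ + ρ * Real.cos φ), mul_pos (sub_pos.2 h1) (sub_pos.2 h1)]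
  have hN : 1 - 2*ρ*Real.cos (g φ) + ρ^2 = (Δ - ρ * Real.cos φ)^2 := by
    rw [hcosg]
    nlinarith [Real.sin_sq_add_cos_sq φ, hΔsq]
  show g' φ • f (g φ) = 1 / Δ
  rw [hf, smul_eq_mul]
  simp only
  rw [hN, Real.sqrt_sq hpos2.le, hg']
  simp only [← hΔdef]
  field_simp

-- reflection lemma
lemma refl_two_pi (h : ℝ → ℝ) (hc : Continuous h) (hh : ∀ t, h (2*π - t) = h t) :
    ∫ t in (0:ℝ)..2*π, h t = 2 * ∫ t in (0:ℝ)..π, h t := by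
  have h1 : ∫ t in (0:ℝ)..2*π, h t
      = (∫ t in (0:ℝ)..π, h t) + ∫ t in π..2*π, h t :=
    (integral_add_adjacent_intervals (hc.intervalIntegrable _ _)
      (hc.intervalIntegrable _ _)).symm
  have h2 : ∫ t in π..(2*π), h t = ∫ t in (0:ℝ)..π, h t := by
    have := integral_comp_sub_left h (2*π) (a := 0) (b := π)
    simp only [sub_zero] at this
    rw [show 2*π - π = π by ring] at this
    rw [← this]
    exact integral_congr fun t _ => hh t
  rw [h1, h2]; ring

lemma half_pi (ρ : ℝ) (hΔpos : ∀ φ : ℝ, 0 < 1 - ρ^2 * Real.sin φ^2) :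
    ∫ φ in (0:ℝ)..π, 1 / Real.sqrt (1 - ρ^2 * Real.sin φ^2)
      = 2 * ∫ φ in (0:ℝ)..(π/2), 1 / Real.sqrt (1 - ρ^2 * Real.sin φ^2) := by
  have hc : Continuous fun φ : ℝ => 1 / Real.sqrt (1 - ρ^2 * Real.sin φ^2) := by
    apply Continuous.div continuous_const (Real.continuous_sqrt.comp (by continuity))
    intro x; exact (Real.sqrt_pos.2 (hΔpos x)).ne'
  have h1 : ∫ φ in (0:ℝ)..π, 1 / Real.sqrt (1 - ρ^2 * Real.sin φ^2)
      = (∫ φ in (0:ℝ)..π/2, 1 / Real.sqrt (1 - ρ^2 * Real.sin φ^2))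
        + ∫ φ in (π/2)..π, 1 / Real.sqrt (1 - ρ^2 * Real.sin φ^2) :=
    (integral_add_adjacent_intervals (hc.intervalIntegrable _ _)
      (hc.intervalIntegrable _ _)).symm
  have h2 : ∫ φ in (π/2)..π, 1 / Real.sqrt (1 - ρ^2 * Real.sin φ^2)
      = ∫ φ in (0:ℝ)..π/2, 1 / Real.sqrt (1 - ρ^2 * Real.sin φ^2) := by
    have := integral_comp_sub_left
      (fun φ => 1 / Real.sqrt (1 - ρ^2 * Real.sin φ^2)) π (a := 0) (b := π/2)
    simp only [sub_zero] at this
    rw [show π - π/2 = π/2 by ring] at this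
    rw [← this]
    refine integral_congr fun φ _ => ?_
    rw [Real.sin_pi_sub]
  rw [h1, h2]; ring

set_option maxHeartbeats 2000000 in
theorem kernel_integral_elliptic (q : ℝ) (hq0 : 0 < q) (hq1 : q < 1)
    (p : ℕ) (hp : 1 ≤ p) :
    ∫ t in (0 : ℝ)..π,
        Real.sqrt (1 - 2 * q ^ p * Real.cos (p * t) + q ^ (2 * p)) /
          (1 - 2 * q * Real.cos t + q ^ 2) =
      2 * (1 - q ^ (2 * p)) / (1 - q ^ 2) *
        ∫ t in (0 : ℝ)..(π / 2), 1 / Real.sqrt (1 - (q ^ p) ^ 2 * Real.sin t ^ 2) := by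
  have hp0 : (p : ℝ) ≠ 0 := Nat.cast_ne_zero.2 (by omega)
  have hρ0 : 0 < q ^ p := pow_pos hq0 p
  have hρ1 : q ^ p < 1 := pow_lt_one₀ hq0.le hq1 (by omega)
  have hq2 : q ^ 2 < 1 := pow_lt_one₀ hq0.le hq1 two_ne_zero
  have hq2' : (1:ℝ) - q^2 ≠ 0 := by nlinarith
  have hrw : q ^ (2*p) = (q^p) ^ 2 := by rw [← pow_mul, mul_comm]
  rw [hrw]
  set ρ : ℝ := q ^ p with hρdef
  have hD : ∀ t : ℝ, 0 < 1 - 2*q*Real.cos t + q^2 := fun t => by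
    nlinarith [Real.cos_le_one t, mul_pos (sub_pos.2 hq1) (sub_pos.2 hq1)]
  have hN : ∀ u : ℝ, 0 < 1 - 2*ρ*Real.cos u + ρ^2 := fun u => by
    nlinarith [Real.cos_le_one u, mul_pos (sub_pos.2 hρ1) (sub_pos.2 hρ1)]
  have hΔpos : ∀ φ : ℝ, 0 < 1 - ρ^2 * Real.sin φ^2 := fun φ => by
    nlinarith [Real.sin_sq_le_one φ, sq_nonneg ρ, pow_lt_one₀ hρ0.le hρ1 two_ne_zero]
  -- continuity facts
  have hcF : Continuous fun u : ℝ => Real.sqrt (1 - 2*ρ*Real.cos u + ρ^2) := by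
    continuity
  have hcfN : Continuous fun u : ℝ => 1 / Real.sqrt (1 - 2*ρ*Real.cos u + ρ^2) :=
    Continuous.div continuous_const hcF (fun x => (Real.sqrt_pos.2 (hN x)).ne')
  have hch : Continuous fun t : ℝ =>
      Real.sqrt (1 - 2*ρ*Real.cos ((p:ℝ)*t) + ρ^2) / (1 - 2*q*Real.cos t + q^2) := by
    apply Continuous.div (hcF.comp (continuous_const.mul continuous_id)) (by continuity)
    exact fun t => (hD t).ne'
  have hck : ∀ k : ℕ, Continuous fun t : ℝ =>
      Real.sqrt (1 - 2*ρ*Real.cos ((p:ℝ)*t) + ρ^2) *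
        (1 / (1 - 2*q*Real.cos (t + 2*π*k/p) + q^2)) := by
    intro k
    apply Continuous.mul (hcF.comp (continuous_const.mul continuous_id))
    apply Continuous.div continuous_const (by continuity)
    exact fun t => (hD _).ne'
  -- Step 1: fold to [0, 2π]
  have hsym1 : ∀ t : ℝ, Real.sqrt (1 - 2*ρ*Real.cos ((p:ℝ)*(2*π - t)) + ρ^2) /
      (1 - 2*q*Real.cos (2*π - t) + q^2)
      = Real.sqrt (1 - 2*ρ*Real.cos ((p:ℝ)*t) + ρ^2) / (1 - 2*q*Real.cos t + q^2) := by
    intro t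
    rw [show (p:ℝ)*(2*π - t) = (p:ℝ)*(2*π) - (p:ℝ)*t by ring, Real.cos_nat_mul_two_pi_sub,
      show 2*π - t = ((1:ℕ):ℝ)*(2*π) - t by push_cast; ring, Real.cos_nat_mul_two_pi_sub]
  have step1 : ∫ t in (0:ℝ)..π,
      Real.sqrt (1 - 2*ρ*Real.cos ((p:ℝ)*t) + ρ^2) / (1 - 2*q*Real.cos t + q^2)
      = (1/2) * ∫ t in (0:ℝ)..2*π,
        Real.sqrt (1 - 2*ρ*Real.cos ((p:ℝ)*t) + ρ^2) / (1 - 2*q*Real.cos t + q^2) := by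
    rw [refl_two_pi _ hch hsym1]; ring
  -- Step 2: split into p pieces and shift
  have hsplit : ∫ t in (0:ℝ)..2*π,
      Real.sqrt (1 - 2*ρ*Real.cos ((p:ℝ)*t) + ρ^2) / (1 - 2*q*Real.cos t + q^2)
      = ∑ k ∈ Finset.range p, ∫ t in (2*π*k/p)..(2*π*(k+1)/p : ℝ),
        Real.sqrt (1 - 2*ρ*Real.cos ((p:ℝ)*t) + ρ^2) / (1 - 2*q*Real.cos t + q^2) := by
    have := intervalIntegral.sum_integral_adjacent_intervals
      (a := fun k : ℕ => 2*π*k/p) (n := p)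
      (f := fun t => Real.sqrt (1 - 2*ρ*Real.cos ((p:ℝ)*t) + ρ^2) /
        (1 - 2*q*Real.cos t + q^2)) (μ := MeasureTheory.volume)
      (fun k _ => hch.intervalIntegrable _ _)
    simp only [Nat.cast_zero, Nat.cast_add, Nat.cast_one, mul_zero, zero_div] at this
    rw [show (2:ℝ)*π*(p:ℝ)/p = 2*π by field_simp] at this
    rw [← this]
  have hshift : ∀ k ∈ Finset.range p, (∫ t in (2*π*(k:ℝ)/p)..(2*π*((k:ℝ)+1)/p : ℝ),
      Real.sqrt (1 - 2*ρ*Real.cos ((p:ℝ)*t) + ρ^2) / (1 - 2*q*Real.cos t + q^2))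
      = ∫ t in (0:ℝ)..(2*π/p), Real.sqrt (1 - 2*ρ*Real.cos ((p:ℝ)*t) + ρ^2) *
        (1 / (1 - 2*q*Real.cos (t + 2*π*k/p) + q^2)) := by
    intro k _
    have := intervalIntegral.integral_comp_add_right
      (f := fun t => Real.sqrt (1 - 2*ρ*Real.cos ((p:ℝ)*t) + ρ^2) /
        (1 - 2*q*Real.cos t + q^2)) (d := 2*π*(k:ℝ)/p) (a := 0) (b := 2*π/p)
    rw [zero_add, show 2*π/(p:ℝ) + 2*π*(k:ℝ)/p = 2*π*((k:ℝ)+1)/p by field_simp; ring] at this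
    rw [← this]
    refine integral_congr fun t _ => ?_
    have e1 : Real.cos ((p:ℝ)*(t + 2*π*(k:ℝ)/p)) = Real.cos ((p:ℝ)*t) := by
      rw [show (p:ℝ)*(t + 2*π*(k:ℝ)/p) = (p:ℝ)*t + ((k:ℤ):ℝ)*(2*π) by push_cast; field_simp,
        Real.cos_add_int_mul_two_pi]
    rw [e1, div_eq_mul_one_div]
  -- Step 3: poisson sum
  have hps : ∀ t : ℝ, ∑ k ∈ Finset.range p,
      Real.sqrt (1 - 2*ρ*Real.cos ((p:ℝ)*t) + ρ^2) *
        (1 / (1 - 2*q*Real.cos (t + 2*π*k/p) + q^2))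
      = ((p:ℝ) * (1 - ρ^2) / (1 - q^2)) *
        (1 / Real.sqrt (1 - 2*ρ*Real.cos ((p:ℝ)*t) + ρ^2)) := by
    intro t
    have hsum := poisson_sum q hq0 hq1 p hp t
    rw [hrw, ← hρdef] at hsum
    have e2 : ∑ k ∈ Finset.range p, (1:ℝ) / (1 - 2*q*Real.cos (t + 2*π*k/p) + q^2)
        = (p:ℝ) * (1 - ρ^2) / ((1 - q^2) * (1 - 2*ρ*Real.cos ((p:ℝ)*t) + ρ^2)) := by
      have e3 : ∀ k : ℕ, (1:ℝ) / (1 - 2*q*Real.cos (t + 2*π*k/p) + q^2)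
          = ((1 - q^2) / (1 - 2*q*Real.cos (t + 2*π*k/p) + q^2)) / (1 - q^2) := by
        intro k
        rw [div_div, mul_comm (1 - 2*q*Real.cos (t + 2*π*(k:ℝ)/p) + q^2) (1-q^2),
          ← div_div, div_self hq2']
      simp_rw [e3]
      rw [← Finset.sum_div, hsum]
      rw [div_div]
      ring_nf
    rw [← Finset.mul_sum, e2]
    set S : ℝ := Real.sqrt (1 - 2*ρ*Real.cos ((p:ℝ)*t) + ρ^2) with hS
    have hS0 : 0 < S := Real.sqrt_pos.2 (hN _)
    have hS2 : S^2 = 1 - 2*ρ*Real.cos ((p:ℝ)*t) + ρ^2 := Real.sq_sqrt (hN _).le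
    rw [← hS2]
    field_simp
  have step2 : ∫ t in (0:ℝ)..2*π,
      Real.sqrt (1 - 2*ρ*Real.cos ((p:ℝ)*t) + ρ^2) / (1 - 2*q*Real.cos t + q^2)
      = ((p:ℝ) * (1 - ρ^2) / (1 - q^2)) *
        ∫ t in (0:ℝ)..(2*π/p), 1 / Real.sqrt (1 - 2*ρ*Real.cos ((p:ℝ)*t) + ρ^2) := by
    rw [hsplit, Finset.sum_congr rfl hshift, ← intervalIntegral.integral_finset_sum
      (fun k _ => (hck k).intervalIntegrable _ _)]
    rw [show (∫ t in (0:ℝ)..(2*π/p), ∑ k ∈ Finset.range p,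
        Real.sqrt (1 - 2*ρ*Real.cos ((p:ℝ)*t) + ρ^2) *
          (1 / (1 - 2*q*Real.cos (t + 2*π*k/p) + q^2)))
        = ∫ t in (0:ℝ)..(2*π/p), ((p:ℝ) * (1 - ρ^2) / (1 - q^2)) *
          (1 / Real.sqrt (1 - 2*ρ*Real.cos ((p:ℝ)*t) + ρ^2)) from
      integral_congr fun t _ => hps t]
    rw [intervalIntegral.integral_const_mul]
  -- Step 4: unfold substitution u = p t
  have step3 : ∫ t in (0:ℝ)..(2*π/p), 1 / Real.sqrt (1 - 2*ρ*Real.cos ((p:ℝ)*t) + ρ^2)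
      = (p:ℝ)⁻¹ * ∫ u in (0:ℝ)..2*π, 1 / Real.sqrt (1 - 2*ρ*Real.cos u + ρ^2) := by
    have := intervalIntegral.integral_comp_mul_left
      (f := fun u => 1 / Real.sqrt (1 - 2*ρ*Real.cos u + ρ^2)) (c := (p:ℝ))
      (a := 0) (b := 2*π/p) hp0
    rw [mul_zero, show (p:ℝ)*(2*π/p) = 2*π by field_simp] at this
    rw [this, smul_eq_mul]
  -- Step 5: fold [0,2π] to [0,π] for 1/sqrt N
  have hsym2 : ∀ u : ℝ, 1 / Real.sqrt (1 - 2*ρ*Real.cos (2*π - u) + ρ^2)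
      = 1 / Real.sqrt (1 - 2*ρ*Real.cos u + ρ^2) := by
    intro u
    rw [show 2*π - u = ((1:ℕ):ℝ)*(2*π) - u by push_cast; ring, Real.cos_nat_mul_two_pi_sub]
  have step4 : ∫ u in (0:ℝ)..2*π, 1 / Real.sqrt (1 - 2*ρ*Real.cos u + ρ^2)
      = 2 * ∫ u in (0:ℝ)..π, 1 / Real.sqrt (1 - 2*ρ*Real.cos u + ρ^2) :=
    refl_two_pi _ hcfN hsym2
  -- Step 6: elliptic substitution
  have step5 : ∫ u in (0:ℝ)..π, 1 / Real.sqrt (1 - 2*ρ*Real.cos u + ρ^2)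
      = 2 * ∫ φ in (0:ℝ)..(π/2), 1 / Real.sqrt (1 - ρ^2 * Real.sin φ^2) := by
    rw [ell_sub ρ hρ0.le hρ1, half_pi ρ hΔpos]
  -- assemble
  rw [show (∫ t in (0:ℝ)..π,
      Real.sqrt (1 - 2*q^p*Real.cos ((p:ℝ)*t) + (q^p)^2) / (1 - 2*q*Real.cos t + q^2))
      = ∫ t in (0:ℝ)..π,
      Real.sqrt (1 - 2*ρ*Real.cos ((p:ℝ)*t) + ρ^2) / (1 - 2*q*Real.cos t + q^2) from rfl]
  rw [step1, step2, step3, step4, step5]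
  have : (∫ t in (0:ℝ)..(π/2), 1 / Real.sqrt (1 - (q^p)^2 * Real.sin t^2))
      = ∫ φ in (0:ℝ)..(π/2), 1 / Real.sqrt (1 - ρ^2 * Real.sin φ^2) := rfl
  rw [this]
  field_simp
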